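/- Let n ≥ 1 and s ∈ (0,1), and define P : ℝ^n × (0,∞) → ℝ by P(x,λ) = λ^{2s}(|x|² + λ²)^{−(n+2s)/2}. Then P is smooth on ℝ^n × (0,∞) and satisfies Δ_x P(x,λ) + ((1−2s)/λ) ∂_λ P(x,λ) + ∂²_{λλ} P(x,λ) = 0 for all (x,λ) ∈ ℝ^n × (0,∞); equivalently, div(λ^{1−2s} ∇P) = 0 in ℝ^n × (0,∞), where ∇ and div are taken with respect to the full variables (x,λ). -/

import Mathlib

open MeasureTheory Filter Set RealInnerProductSpace

/-- The Poisson-type kernel `P(x,λ) = λ^{2s}(|x|²+λ²)^{−(n+2s)/2}`. -/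
noncomputable def Pker (n : ℕ) (s : ℝ) (x : EuclideanSpace ℝ (Fin n)) (lam : ℝ) : ℝ :=
  lam ^ (2 * s) * (‖x‖ ^ 2 + lam ^ 2) ^ (-((n : ℝ) + 2 * s) / 2)

private lemma hasDerivAt_qpow (a b α t : ℝ) (hq : 0 < a + 2*b*t + t^2) :
    HasDerivAt (fun t : ℝ => (a + 2*b*t + t^2) ^ α)
      ((2*b + 2*t) * α * (a + 2*b*t + t^2) ^ (α - 1)) t := by
  have h1 : HasDerivAt (fun t : ℝ => a + 2*b*t + t^2) (2*b + 2*t) t := by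
    have h := (((hasDerivAt_id t).const_mul (2*b)).const_add a).add (hasDerivAt_pow 2 t)
    exact h.congr_deriv (by norm_num)
  exact h1.rpow_const (Or.inl hq.ne')

private lemma second_deriv_x (C a b α : ℝ) (ha : b^2 < a) :
    iteratedDeriv 2 (fun t : ℝ => C * (a + 2*b*t + t^2) ^ α) 0
      = C * (2*α*a^(α-1) + 4*b^2*α*(α-1)*a^(α-2)) := by
  have hq : ∀ t : ℝ, 0 < a + 2*b*t + t^2 := fun t => by nlinarith [sq_nonneg (t+b)]
  have hd : deriv (fun t : ℝ => C * (a + 2*b*t + t^2) ^ α)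
      = fun t : ℝ => C * ((2*b + 2*t) * (α * (a + 2*b*t + t^2) ^ (α - 1))) := by
    funext t
    have := ((hasDerivAt_qpow a b α t (hq t)).const_mul C).deriv
    rw [this]; ring
  have h2 : iteratedDeriv 2 (fun t : ℝ => C * (a + 2*b*t + t^2) ^ α) 0
      = deriv (deriv (fun t : ℝ => C * (a + 2*b*t + t^2) ^ α)) 0 := by
    rw [iteratedDeriv_succ, iteratedDeriv_one]
  rw [h2, hd]
  have h2b : HasDerivAt (fun t : ℝ => 2*b + 2*t) 2 0 := by
    simpa using ((hasDerivAt_id (0:ℝ)).const_mul 2).const_add (2*b)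
  have hpow : HasDerivAt (fun t : ℝ => (a + 2*b*t + t^2) ^ (α-1))
      ((2*b + 2*0) * (α-1) * (a + 2*b*0 + 0^2) ^ (α-1-1)) 0 :=
    hasDerivAt_qpow a b (α-1) 0 (hq 0)
  have hG := (h2b.mul (hpow.const_mul α)).const_mul C
  rw [(show HasDerivAt (fun t : ℝ => C * ((2*b + 2*t) * (α * (a + 2*b*t + t^2) ^ (α - 1)))) _ 0 from hG).deriv]
  have e1 : a + 2*b*(0:ℝ) + (0:ℝ)^2 = a := by ring
  rw [e1, show α - 1 - 1 = α - 2 by ring]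
  ring

private lemma hasDerivAt_lam (r2 a β l : ℝ) (hl : 0 < l) (hr : 0 ≤ r2) :
    HasDerivAt (fun l : ℝ => l ^ a * (r2 + l^2) ^ β)
      (a * l^(a-1) * (r2 + l^2)^β + l^a * (2*l*β*(r2+l^2)^(β-1))) l := by
  have hu : (0:ℝ) < r2 + l^2 := by positivity
  have h1 : HasDerivAt (fun l : ℝ => l ^ a) (a * l^(a-1)) l :=
    Real.hasDerivAt_rpow_const (Or.inl hl.ne')
  have hb : HasDerivAt (fun l : ℝ => r2 + l^2) (2*l) l := by
    have := (hasDerivAt_pow 2 l).const_add r2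
    exact this.congr_deriv (by norm_num)
  have h2 : HasDerivAt (fun l : ℝ => (r2 + l^2) ^ β) ((2*l)*β*(r2+l^2)^(β-1)) l :=
    hb.rpow_const (Or.inl hu.ne')
  exact h1.mul h2

/-- `P` is smooth on `ℝ^n × (0,∞)` and satisfies the degenerate elliptic
equation `Δ_x P + ((1−2s)/λ) ∂_λ P + ∂²_{λλ} P = 0` there (equivalently,
`div(λ^{1−2s}∇P) = 0`). -/
theorem poisson_kernel_is_extension_solution
    (n : ℕ) (hn : 1 ≤ n) (s : ℝ) (hs : s ∈ Set.Ioo (0 : ℝ) 1) :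
    ContDiffOn ℝ (⊤ : ℕ∞)
      (fun p : EuclideanSpace ℝ (Fin n) × ℝ => Pker n s p.1 p.2)
      {p : EuclideanSpace ℝ (Fin n) × ℝ | 0 < p.2} ∧
    ∀ (x : EuclideanSpace ℝ (Fin n)) (lam : ℝ), 0 < lam →
      (∑ i : Fin n,
          iteratedDeriv 2 (fun t : ℝ => Pker n s (x + t • EuclideanSpace.single i 1) lam) 0)
        + (1 - 2 * s) / lam * deriv (fun l : ℝ => Pker n s x l) lam
        + iteratedDeriv 2 (fun l : ℝ => Pker n s x l) lam = 0 := by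
  set α : ℝ := -((n : ℝ) + 2 * s) / 2 with hα
  constructor
  · -- smoothness
    intro p hp
    have hp2 : (0:ℝ) < p.2 := hp
    apply ContDiffAt.contDiffWithinAt
    have h1 : ContDiffAt ℝ (⊤ : ℕ∞) (fun p : EuclideanSpace ℝ (Fin n) × ℝ => p.2 ^ (2*s)) p :=
      (contDiff_snd.contDiffAt).rpow_const_of_ne (ne_of_gt hp2)
    have h2 : ContDiffAt ℝ (⊤ : ℕ∞)
        (fun p : EuclideanSpace ℝ (Fin n) × ℝ => (‖p.1‖^2 + p.2^2) ^ α) p := by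
      have hb : ContDiffAt ℝ (⊤ : ℕ∞)
          (fun p : EuclideanSpace ℝ (Fin n) × ℝ => ‖p.1‖^2 + p.2^2) p :=
        ((contDiff_fst.norm_sq ℝ).add (contDiff_snd.pow 2)).contDiffAt
      apply hb.rpow_const_of_ne
      exact (add_pos_of_nonneg_of_pos (by positivity) (pow_pos hp2 2)).ne'
    exact h1.mul h2
  · intro x lam hlam
    have hr : (0:ℝ) ≤ ‖x‖^2 := by positivity
    set r2 : ℝ := ‖x‖^2 with hr2
    set u : ℝ := r2 + lam^2 with hu
    have hupos : 0 < u := by positivity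
    have hsumsq : ∑ i : Fin n, (x i)^2 = r2 := by
      rw [hr2, ← real_inner_self_eq_norm_sq, PiLp.inner_apply]
      simp [sq]
    -- x-part
    have hxsum : (∑ i : Fin n,
          iteratedDeriv 2 (fun t : ℝ => Pker n s (x + t • EuclideanSpace.single i 1) lam) 0)
        = lam ^ (2*s) * (2*(n:ℝ)*α*u^(α-1) + 4*r2*α*(α-1)*u^(α-2)) := by
      have hnorm : ∀ (i : Fin n) (t : ℝ),
          ‖x + t • EuclideanSpace.single i (1:ℝ)‖^2 = r2 + 2*(x i)*t + t^2 := by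
        intro i t
        rw [norm_add_sq_real]
        have h1 : ⟪x, t • EuclideanSpace.single i (1:ℝ)⟫ = t * x i := by
          rw [inner_smul_right]
          simp [EuclideanSpace.inner_single_right]
        rw [h1, norm_smul]
        simp [EuclideanSpace.norm_single]
        ring
      have key : ∀ i : Fin n,
          iteratedDeriv 2 (fun t : ℝ => Pker n s (x + t • EuclideanSpace.single i 1) lam) 0
            = lam ^ (2*s) * (2*α*u^(α-1) + 4*(x i)^2*α*(α-1)*u^(α-2)) := by
        intro i
        have heq : (fun t : ℝ => Pker n s (x + t • EuclideanSpace.single i 1) lam)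
            = fun t : ℝ => lam ^ (2*s) * (u + 2*(x i)*t + t^2) ^ α := by
          funext t
          rw [Pker, hnorm i t, hu, hα]
          congr 1
          ring
        rw [heq]
        apply second_deriv_x
        have hxi : (x i)^2 ≤ r2 := by
          rw [← hsumsq]
          exact Finset.single_le_sum (fun j _ => sq_nonneg (x j)) (Finset.mem_univ i)
        nlinarith [pow_pos hlam 2]
      rw [Finset.sum_congr rfl (fun i _ => key i)]
      rw [← Finset.mul_sum, Finset.sum_add_distrib, Finset.sum_const]
      simp only [Finset.card_univ, Fintype.card_fin, nsmul_eq_mul]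
      have : (∑ i : Fin n, 4*(x i)^2*α*(α-1)*u^(α-2))
          = 4*r2*α*(α-1)*u^(α-2) := by
        rw [show (∑ i : Fin n, 4*(x i)^2*α*(α-1)*u^(α-2))
            = (∑ i : Fin n, (x i)^2) * (4*α*(α-1)*u^(α-2)) from by
          rw [Finset.sum_mul]; exact Finset.sum_congr rfl fun i _ => by ring]
        rw [hsumsq]; ring
      rw [this]; ring
    -- lam-part: first derivative
    have hPeq : (fun l : ℝ => Pker n s x l) = fun l : ℝ => l^(2*s) * (r2 + l^2)^α := rfl
    have hd1 : deriv (fun l : ℝ => Pker n s x l) lam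
        = 2*s * lam^(2*s-1) * u^α + lam^(2*s) * (2*lam*α*u^(α-1)) := by
      rw [hPeq]
      exact (hasDerivAt_lam r2 (2*s) α lam hlam hr).deriv
    -- lam-part: second derivative
    have hG : deriv (fun l : ℝ => Pker n s x l) =ᶠ[nhds lam]
        (fun l : ℝ => (2*s) * (l^(2*s-1) * (r2+l^2)^α) + (2*α) * (l^(2*s+1) * (r2+l^2)^(α-1))) := by
      filter_upwards [isOpen_Ioi.mem_nhds hlam] with l hl
      have hl : (0:ℝ) < l := hl
      rw [hPeq, (hasDerivAt_lam r2 (2*s) α l hl hr).deriv, Real.rpow_add_one hl.ne']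
      ring
    have hd2 : iteratedDeriv 2 (fun l : ℝ => Pker n s x l) lam
        = 2*s*((2*s-1)*lam^(2*s-2)*u^α + lam^(2*s-1)*(2*lam*α*u^(α-1)))
          + 2*α*((2*s+1)*lam^(2*s)*u^(α-1) + lam^(2*s+1)*(2*lam*(α-1)*u^(α-2))) := by
      have h2 : iteratedDeriv 2 (fun l : ℝ => Pker n s x l) lam
          = deriv (deriv (fun l : ℝ => Pker n s x l)) lam := by
        rw [iteratedDeriv_succ, iteratedDeriv_one]
      rw [h2, hG.deriv_eq]
      have hA := (hasDerivAt_lam r2 (2*s-1) α lam hlam hr).const_mul (2*s)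
      have hB := (hasDerivAt_lam r2 (2*s+1) (α-1) lam hlam hr).const_mul (2*α)
      rw [(show HasDerivAt (fun l : ℝ => 2 * s * (l ^ (2 * s - 1) * (r2 + l ^ 2) ^ α) + 2 * α * (l ^ (2 * s + 1) * (r2 + l ^ 2) ^ (α - 1))) _ lam from hA.add hB).deriv]
      rw [show (2*s-1-1 : ℝ) = 2*s-2 by ring, show (2*s+1-1 : ℝ) = 2*s by ring,
        show (α-1-1 : ℝ) = α-2 by ring]
    rw [hxsum, hd1, hd2]
    -- normalize powers
    have hl2 : lam ^ (2*s) = lam^(2*s-2) * lam^2 := by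
      rw [← Real.rpow_natCast lam 2, ← Real.rpow_add hlam]; congr 1; push_cast; ring
    have hl1 : lam ^ (2*s-1) = lam^(2*s-2) * lam := by
      rw [show (2*s-1:ℝ) = (2*s-2) + 1 by ring, Real.rpow_add hlam, Real.rpow_one]
    have hl3 : lam ^ (2*s+1) = lam^(2*s-2) * lam^3 := by
      rw [← Real.rpow_natCast lam 3, ← Real.rpow_add hlam]; congr 1; push_cast; ring
    have hu1 : u ^ α = u^(α-2) * u^2 := by
      rw [← Real.rpow_natCast u 2, ← Real.rpow_add hupos]; congr 1; push_cast; ring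
    have hu2 : u ^ (α-1) = u^(α-2) * u := by
      rw [show (α-1:ℝ) = (α-2) + 1 by ring, Real.rpow_add hupos, Real.rpow_one]
    rw [hl2, hl1, hl3, hu1, hu2]
    have hlne : lam ≠ 0 := hlam.ne'
    field_simp
    rw [hu, hα]
    ring
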